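/- For all real t₀ > 0, t₁ > 0 and all nonnegative integers z₁ ≥ z₂, z₃ with (z₁,z₂,z₃) ≠ (0,0,0) and M(z₁,z₂,z₃) > 0, one has η(z₁,z₂,z₃;t₀,t₁) ≥ min(12/t₀, 4/t₀ + 8/t₁). Moreover M(2,1,0) = 1 with η(2,1,0;t₀,t₁) = 12/t₀ and M(2,1,1) = 1 with η(2,1,1;t₀,t₁) = 4/t₀ + 8/t₁; consequently the smallest value of η over all such triples equals 4/t₀ + 8/t₁ if t₁ ≥ t₀ and equals 12/t₀ if t₁ ≤ t₀. -/
import Mathlib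


/-- The partition function `℘(a₁,a₂)`: the number of triples `(m₁,m₂,m₃) ∈ ℕ₀³` with
`a₁ = 3(m₁+m₂)` and `a₂ = m₃ − m₁ − 2m₂`. -/
noncomputable def wp (a₁ a₂ : ℤ) : ℕ :=
  Set.ncard {m : ℕ × ℕ × ℕ |
    a₁ = 3 * ((m.1 : ℤ) + (m.2.1 : ℤ)) ∧ a₂ = (m.2.2 : ℤ) - (m.1 : ℤ) - 2 * (m.2.1 : ℤ)}

/-- The branching multiplicity `m(z₁,z₂,z₃)` of the trivial `U•(2)`-representation in the
irreducible `SU(3)×SO(3)`-representation of highest weight `z₁λ₁+z₂λ₂+z₃μ₁`, expressed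
as a seven-term alternating sum of partition function values. -/
noncomputable def branchM (z₁ z₂ z₃ : ℕ) : ℤ :=
  (wp ((z₁ : ℤ) + z₂) (-(z₃ : ℤ) - z₁ - 2) : ℤ)
  + (wp ((z₁ : ℤ) + z₂) ((z₃ : ℤ) - z₂) : ℤ)
  - (wp ((z₁ : ℤ) + z₂) (-(z₃ : ℤ) - z₂ - 1) : ℤ)
  - (wp ((z₁ : ℤ) + z₂) ((z₃ : ℤ) - z₁ - 1) : ℤ)
  + (wp ((z₁ : ℤ) - 2 * z₂ - 3) ((z₂ : ℤ) + 1 - z₃) : ℤ)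
  + (wp ((z₁ : ℤ) - 2 * z₂ - 3) ((z₂ : ℤ) - z₁ + z₃) : ℤ)
  - (wp ((z₁ : ℤ) - 2 * z₂ - 3) ((z₂ : ℤ) + 2 + z₃) : ℤ)

/-- The Laplace eigenvalue `η(z₁,z₂,z₃;t₀,t₁)` of the metric `g_{t₀,t₁}` on the
Aloff–Wallach manifold `W^{1,1}` associated with the representation `ϱ(z₁,z₂,z₃)`. -/
noncomputable def eta (z₁ z₂ z₃ : ℕ) (t₀ t₁ : ℝ) : ℝ :=
  (4 * ((z₁ : ℝ) ^ 2 + (z₂ : ℝ) ^ 2 - (z₁ : ℝ) * ((z₂ : ℝ) - 3)) / 3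
      - 4 * (z₃ : ℝ) * ((z₃ : ℝ) + 1)) / t₀
    + 4 * (z₃ : ℝ) * ((z₃ : ℝ) + 1) / t₁


lemma wp_mul3 (k : ℕ) (a : ℤ) :
    (wp (3*(k:ℤ)) a : ℤ) = max 0 (min ((k:ℤ)+1) (a+2*(k:ℤ)+1)) := by
  have hset : {m : ℕ × ℕ × ℕ |
      3*(k:ℤ) = 3 * ((m.1 : ℤ) + (m.2.1 : ℤ)) ∧ a = (m.2.2 : ℤ) - (m.1 : ℤ) - 2 * (m.2.1 : ℤ)}
      = ↑((Finset.Ico ((-(a+k)).toNat) (k+1)).image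
          (fun m₂ => (k - m₂, m₂, (a + k + m₂).toNat))) := by
    ext ⟨m₁, m₂, m₃⟩
    simp only [Set.mem_setOf_eq, Finset.coe_image, Set.mem_image, Finset.mem_coe,
      Finset.mem_Ico, Prod.mk.injEq]
    constructor
    · rintro ⟨h1, h2⟩
      exact ⟨m₂, by omega, by omega, by omega, by omega⟩
    · rintro ⟨x, ⟨hx1, hx2⟩, h1, h2, h3⟩
      subst h2
      constructor <;> omega
  rw [wp, hset, Set.ncard_coe_finset, Finset.card_image_of_injOn, Nat.card_Ico]
  · omega
  · intro x _ y _ h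
    simpa using congrArg (fun p => p.2.1) h

lemma wp_zero (a₁ a₂ : ℤ) (h : ¬(0 ≤ a₁ ∧ (3:ℤ) ∣ a₁)) : wp a₁ a₂ = 0 := by
  have hs : {m : ℕ × ℕ × ℕ |
      a₁ = 3 * ((m.1 : ℤ) + (m.2.1 : ℤ)) ∧ a₂ = (m.2.2 : ℤ) - (m.1 : ℤ) - 2 * (m.2.1 : ℤ)} = ∅ := by
    ext ⟨m₁, m₂, m₃⟩
    simp only [Set.mem_setOf_eq, Set.mem_empty_iff_false, iff_false, not_and]
    intro h1 _
    exact h ⟨by omega, ⟨m₁ + m₂, by push_cast [h1]; ring⟩⟩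
  rw [wp, hs, Set.ncard_empty]

set_option maxHeartbeats 1000000 in
lemma branch_bounds (z₁ z₂ z₃ : ℕ) (hle : z₂ ≤ z₁) (hne : ¬(z₁ = 0 ∧ z₂ = 0 ∧ z₃ = 0))
    (h : 0 < branchM z₁ z₂ z₃) :
    ∃ k : ℕ, 1 ≤ k ∧ z₁ + z₂ = 3*k ∧ z₃ ≤ k ∧ z₂ + z₃ ≤ 2*k ∧ k ≤ z₂ + z₃ ∧ z₂ ≤ k + z₃ := by
  by_cases h3 : (3:ℤ) ∣ ((z₁:ℤ) + z₂)
  · obtain ⟨c, hc⟩ := h3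
    have hc' : (z₁:ℤ) + z₂ = 3*((c.toNat : ℕ) : ℤ) := by omega
    refine ⟨c.toNat, ?_⟩
    by_cases h2 : 2*(z₂:ℤ) + 3 ≤ z₁
    · have h3' : ∃ d : ℕ, (z₁:ℤ) - 2*z₂ - 3 = 3*(d : ℤ) := by
        refine ⟨((z₁:ℤ) - 2*z₂ - 3).toNat / 3, ?_⟩
        omega
      obtain ⟨d, hd'⟩ := h3'
      unfold branchM at h
      rw [hc', hd', wp_mul3, wp_mul3, wp_mul3, wp_mul3, wp_mul3, wp_mul3, wp_mul3] at h
      omega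
    · have w0 : ∀ a, wp ((z₁:ℤ) - 2*z₂ - 3) a = 0 := fun a => wp_zero _ _ (by omega)
      unfold branchM at h
      rw [hc', wp_mul3, wp_mul3, wp_mul3, wp_mul3, w0, w0, w0] at h
      omega
  · have w0 : ∀ a, wp ((z₁:ℤ) + z₂) a = 0 := fun a => wp_zero _ _ (fun hh => h3 hh.2)
    have w0' : ∀ a, wp ((z₁:ℤ) - 2*z₂ - 3) a = 0 := fun a =>
      wp_zero _ _ (fun hh => h3 (by omega))
    unfold branchM at h
    rw [w0, w0, w0, w0, w0', w0', w0'] at h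
    simp at h

lemma key_int (k z₁ z₂ z₃ : ℤ) (hk : 1 ≤ k) (hsum : z₁ + z₂ = 3*k)
    (h1 : z₃ ≤ k) (h2 : z₂ + z₃ ≤ 2*k) (h4 : z₂ ≤ k + z₃) :
    3*z₃^2 + 3*z₃ + 3 ≤ z₁^2 + z₂^2 - z₁*(z₂-3) := by
  nlinarith [mul_nonneg (by linarith : (0:ℤ) ≤ k) (by linarith : (0:ℤ) ≤ k - z₃),
    mul_nonneg (by linarith : (0:ℤ) ≤ 2*k - z₂ - z₃) (by linarith : (0:ℤ) ≤ k - z₂ + z₃)]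

lemma wp_three (a : ℤ) : (wp 3 a : ℤ) = max 0 (min 2 (a+3)) := by
  have h := wp_mul3 1 a
  norm_num at h
  rw [h]
  omega

lemma wp_negthree (a : ℤ) : wp (-3) a = 0 := wp_zero _ _ (by norm_num)

lemma branchM210 : branchM 2 1 0 = 1 := by
  unfold branchM
  norm_num [wp_three, wp_negthree]

lemma branchM211 : branchM 2 1 1 = 1 := by
  unfold branchM
  norm_num [wp_three, wp_negthree]

lemma eta210 (t₀ t₁ : ℝ) : eta 2 1 0 t₀ t₁ = 12 / t₀ := by
  unfold eta; norm_num

lemma eta211 (t₀ t₁ : ℝ) : eta 2 1 1 t₀ t₁ = 4 / t₀ + 8 / t₁ := by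
  unfold eta; norm_num

/-- **The first nonzero eigenvalue of `(W^{1,1}, g_{t₀,t₁})`.**
For `t₀, t₁ > 0`, every eigenvalue `η(z₁,z₂,z₃;t₀,t₁)` with `z₁ ≥ z₂`,
`(z₁,z₂,z₃) ≠ (0,0,0)` and `m(z₁,z₂,z₃) > 0` is at least `min(12/t₀, 4/t₀ + 8/t₁)`.
Moreover `m(2,1,0) = 1` with `η(2,1,0) = 12/t₀` and `m(2,1,1) = 1` with
`η(2,1,1) = 4/t₀ + 8/t₁`; consequently the smallest eigenvalue over all such triples
equals `4/t₀ + 8/t₁` if `t₁ ≥ t₀` and `12/t₀` if `t₁ ≤ t₀`. -/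
theorem first_eigenvalue_AloffWallach (t₀ t₁ : ℝ) (ht₀ : 0 < t₀) (ht₁ : 0 < t₁) :
    (∀ z₁ z₂ z₃ : ℕ, z₂ ≤ z₁ → (z₁, z₂, z₃) ≠ (0, 0, 0) → 0 < branchM z₁ z₂ z₃ →
      min (12 / t₀) (4 / t₀ + 8 / t₁) ≤ eta z₁ z₂ z₃ t₀ t₁) ∧
    branchM 2 1 0 = 1 ∧ eta 2 1 0 t₀ t₁ = 12 / t₀ ∧
    branchM 2 1 1 = 1 ∧ eta 2 1 1 t₀ t₁ = 4 / t₀ + 8 / t₁ ∧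
    (t₀ ≤ t₁ →
      IsLeast {x : ℝ | ∃ z₁ z₂ z₃ : ℕ, z₂ ≤ z₁ ∧ (z₁, z₂, z₃) ≠ (0, 0, 0) ∧
        0 < branchM z₁ z₂ z₃ ∧ x = eta z₁ z₂ z₃ t₀ t₁} (4 / t₀ + 8 / t₁)) ∧
    (t₁ ≤ t₀ →
      IsLeast {x : ℝ | ∃ z₁ z₂ z₃ : ℕ, z₂ ≤ z₁ ∧ (z₁, z₂, z₃) ≠ (0, 0, 0) ∧
        0 < branchM z₁ z₂ z₃ ∧ x = eta z₁ z₂ z₃ t₀ t₁} (12 / t₀)) := by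
  have main : ∀ z₁ z₂ z₃ : ℕ, z₂ ≤ z₁ → (z₁, z₂, z₃) ≠ (0, 0, 0) → 0 < branchM z₁ z₂ z₃ →
      min (12 / t₀) (4 / t₀ + 8 / t₁) ≤ eta z₁ z₂ z₃ t₀ t₁ := by
    intro z₁ z₂ z₃ hle hne hM
    have hne' : ¬(z₁ = 0 ∧ z₂ = 0 ∧ z₃ = 0) := by
      rintro ⟨a, b, c⟩; exact hne (by simp [a, b, c])
    obtain ⟨k, hk1, hsum, hb1, hb2, hb3, hb4⟩ := branch_bounds z₁ z₂ z₃ hle hne' hM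
    by_cases hz : z₃ = 0
    · subst hz
      have hz2 : z₂ = k := by omega
      have hz1 : z₁ = 2*k := by omega
      have hk' : (1:ℝ) ≤ (k:ℝ) := by exact_mod_cast hk1
      have e1 : (z₁:ℝ) = 2*(k:ℝ) := by exact_mod_cast hz1
      have e2 : (z₂:ℝ) = (k:ℝ) := by exact_mod_cast hz2
      have hQ : (9:ℝ) ≤ (z₁:ℝ)^2 + (z₂:ℝ)^2 - (z₁:ℝ)*((z₂:ℝ)-3) := by
        rw [e1, e2]; nlinarith
      refine le_trans (min_le_left _ _) ?_
      unfold eta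
      norm_num
      gcongr
      linarith
    · have hz1 : 1 ≤ z₃ := Nat.one_le_iff_ne_zero.2 hz
      have hkey : (3:ℤ)*(z₃:ℤ)^2 + 3*(z₃:ℤ) + 3 ≤ (z₁:ℤ)^2 + (z₂:ℤ)^2 - (z₁:ℤ)*((z₂:ℤ)-3) :=
        key_int (k:ℤ) _ _ _ (by exact_mod_cast hk1) (by exact_mod_cast hsum)
          (by exact_mod_cast hb1) (by exact_mod_cast hb2) (by exact_mod_cast hb4)
      have hkeyR : (3:ℝ)*(z₃:ℝ)^2 + 3*(z₃:ℝ) + 3 ≤ (z₁:ℝ)^2 + (z₂:ℝ)^2 - (z₁:ℝ)*((z₂:ℝ)-3) := by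
        exact_mod_cast hkey
      have hz3R : (1:ℝ) ≤ (z₃:ℝ) := by exact_mod_cast hz1
      refine le_trans (min_le_right _ _) ?_
      unfold eta
      gcongr
      · nlinarith
      · nlinarith
  refine ⟨main, branchM210, eta210 t₀ t₁, branchM211, eta211 t₀ t₁, ?_, ?_⟩
  · intro hts
    have h8 : 8/t₁ ≤ 8/t₀ := by gcongr
    constructor
    · exact ⟨2, 1, 1, by norm_num, by simp, by rw [branchM211]; norm_num, (eta211 t₀ t₁).symm⟩
    · rintro x ⟨a, b, c, h1, h2, h3, rfl⟩
      refine le_trans (le_min ?_ (le_refl _)) (main a b c h1 h2 h3)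
      have h12 : 4/t₀ + 8/t₀ = 12/t₀ := by ring
      linarith
  · intro hts
    have h8 : 8/t₀ ≤ 8/t₁ := by gcongr
    constructor
    · exact ⟨2, 1, 0, by norm_num, by simp, by rw [branchM210]; norm_num, (eta210 t₀ t₁).symm⟩
    · rintro x ⟨a, b, c, h1, h2, h3, rfl⟩
      refine le_trans (le_min (le_refl _) ?_) (main a b c h1 h2 h3)
      have h12 : 4/t₀ + 8/t₀ = 12/t₀ := by ring
      linarith
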